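/- Let p be an odd prime, n a positive integer with gcd(n,p) = 1, η ∈ F_{p^2} \ F_p, and Φ : F_p^n × F_p^n → F_{p^2}[X]/(X^n+1) the identification (a,b) ↦ a + ηb (coordinatewise, then a vector c ↦ ∑_j c_j x^j). Let S be a subspace of F_p^n × F_p^n with S ⊆ S^⊥, and suppose Φ(S^⊥) equals the ideal generated by a monic divisor h of X^n + 1 over F_{p^2}. If there exist a primitive 2n-th root of unity β in an algebraic closure of F_{p^2}, an odd integer ℓ, and d ≥ 1 such that β^{ℓ+2j} is a root of h for all j = 0, …, d−2 (i.e., the BCH distance of h is at least d), then every nonzero element (a,b) of S^⊥ has joint weight at least d; in particular the minimum distance of the associated stabilizer code, the minimum joint weight over S^⊥ \ S, is at least d. -/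

import Mathlib

open Polynomial

/-- The symplectic inner product on `F_p^n × F_p^n`. -/
def sympForm (p n : ℕ) (u v : (Fin n → ZMod p) × (Fin n → ZMod p)) : ZMod p :=
  (∑ j, u.1 j * v.2 j) - (∑ j, u.2 j * v.1 j)

/-- The symplectic dual of a subset of `F_p^n × F_p^n`. -/
def sympDual (p n : ℕ) (S : Set ((Fin n → ZMod p) × (Fin n → ZMod p))) :
    Set ((Fin n → ZMod p) × (Fin n → ZMod p)) :=
  {u | ∀ v ∈ S, sympForm p n u v = 0}

/-- The joint weight of a pair `(a,b) ∈ F_p^n × F_p^n`: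
`wt(a,b) = #{j : (a_j, b_j) ≠ (0,0)}`. -/
def jointWt (p n : ℕ) (ab : (Fin n → ZMod p) × (Fin n → ZMod p)) : ℕ :=
  (Finset.univ.filter fun j : Fin n => ab.1 j ≠ 0 ∨ ab.2 j ≠ 0).card

/-- The ring `R(η) = F_{p²}[X]/(X^n + 1)`. -/
abbrev Rpn2 (p n : ℕ) [Fact p.Prime] :=
  Polynomial (GaloisField p 2) ⧸ Ideal.span {(X : Polynomial (GaloisField p 2)) ^ n + 1}

/-- The quotient map `F_{p²}[X] → R(η)`. -/
noncomputable def mkR2 (p n : ℕ) [Fact p.Prime] : Polynomial (GaloisField p 2) →+* Rpn2 p n :=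
  Ideal.Quotient.mk (Ideal.span {(X : Polynomial (GaloisField p 2)) ^ n + 1})

/-- The identification `Φ : F_p^n × F_p^n → R(η)`, `(a,b) ↦ a + ηb`. -/
noncomputable def PhiMap (p n : ℕ) [Fact p.Prime] (η : GaloisField p 2)
    (ab : (Fin n → ZMod p) × (Fin n → ZMod p)) : Rpn2 p n :=
  mkR2 p n (∑ j : Fin n,
    C (algebraMap (ZMod p) (GaloisField p 2) (ab.1 j)
        + η * algebraMap (ZMod p) (GaloisField p 2) (ab.2 j)) * X ^ (j : ℕ))

/-- BCH bound for linear negacyclic quantum stabilizer codes: if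
`S ⊆ S^⊥`, `Φ(S^⊥)` is the ideal generated by a monic divisor `h` of `X^n+1`, and `h`
has BCH distance at least `d`, then every nonzero element of `S^⊥` has joint weight at
least `d`; in particular the minimum distance (minimum joint weight on `S^⊥ \ S`) is at
least `d`. -/
theorem stmt16 (p n : ℕ) [Fact p.Prime] (hp : Odd p) (hn : 0 < n)
    (hgcd : Nat.gcd n p = 1)
    (η : GaloisField p 2) (hη : η ∉ Set.range (algebraMap (ZMod p) (GaloisField p 2)))
    (S : Submodule (ZMod p) ((Fin n → ZMod p) × (Fin n → ZMod p)))
    (hiso : (S : Set ((Fin n → ZMod p) × (Fin n → ZMod p)))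
        ⊆ sympDual p n (S : Set ((Fin n → ZMod p) × (Fin n → ZMod p))))
    (h : Polynomial (GaloisField p 2)) (hhm : h.Monic) (hhdvd : h ∣ X ^ n + 1)
    (hgen : PhiMap p n η '' sympDual p n (S : Set ((Fin n → ZMod p) × (Fin n → ZMod p)))
        = (Ideal.span {mkR2 p n h} : Set (Rpn2 p n)))
    (β : AlgebraicClosure (GaloisField p 2)) (hβ : IsPrimitiveRoot β (2 * n))
    (ℓ : ℤ) (hℓ : Odd ℓ) (d : ℕ) (hd : 1 ≤ d)
    (hroots : ∀ j : ℕ, j + 2 ≤ d → aeval (β ^ (ℓ + 2 * (j : ℤ))) h = 0) :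
    (∀ ab ∈ sympDual p n (S : Set ((Fin n → ZMod p) × (Fin n → ZMod p))),
      ab ≠ 0 → d ≤ jointWt p n ab) ∧
    (∀ ab ∈ sympDual p n (S : Set ((Fin n → ZMod p) × (Fin n → ZMod p))),
      ab ∉ S → d ≤ jointWt p n ab) := by
  classical
  have hβ0 : (β : (AlgebraicClosure (GaloisField p 2))) ≠ 0 := hβ.ne_zero (by positivity)
  have main : ∀ ab ∈ sympDual p n (S : Set ((Fin n → ZMod p) × (Fin n → ZMod p))),
      ab ≠ 0 → d ≤ jointWt p n ab := by
    intro ab hab habne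
    by_contra hlt
    push_neg at hlt
    -- the coefficient vector
    set c : Fin n → (GaloisField p 2) := fun j => algebraMap (ZMod p) (GaloisField p 2) (ab.1 j)
        + η * algebraMap (ZMod p) (GaloisField p 2) (ab.2 j) with hc
    have hczero : ∀ j, c j = 0 ↔ (ab.1 j = 0 ∧ ab.2 j = 0) := by
      intro j
      constructor
      · intro h0
        by_cases hb : ab.2 j = 0
        · refine ⟨?_, hb⟩
          have : algebraMap (ZMod p) (GaloisField p 2) (ab.1 j) = 0 := by
            simpa [hc, hb] using h0
          exact (_root_.map_eq_zero _).mp this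
        · exfalso
          apply hη
          refine ⟨-(ab.1 j) / (ab.2 j), ?_⟩
          have hb' : algebraMap (ZMod p) (GaloisField p 2) (ab.2 j) ≠ 0 :=
            fun h0' => hb ((_root_.map_eq_zero _).mp h0')
          rw [map_div₀, map_neg]
          field_simp
          linear_combination -(1:(GaloisField p 2)) * h0
      · rintro ⟨h1, h2⟩
        simp [hc, h1, h2]
    set T : Finset (Fin n) := Finset.univ.filter (fun j => c j ≠ 0) with hT
    have hwt : jointWt p n ab = T.card := by
      unfold jointWt
      congr 1
      apply Finset.filter_congr
      intro j _
      constructor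
      · intro hj
        intro h0
        rcases (hczero j).mp h0 with ⟨h1, h2⟩
        rcases hj with h | h
        · exact h h1
        · exact h h2
      · intro hj
        by_contra hcon
        push_neg at hcon
        exact hj ((hczero j).mpr hcon)
    set w := T.card with hw
    have hwd : w < d := by omega
    -- the polynomial
    set f0 : Polynomial (GaloisField p 2) := ∑ j : Fin n, C (c j) * X ^ (j : ℕ) with hf0
    -- divisibility by h
    have hmem : PhiMap p n η ab ∈ (Ideal.span {mkR2 p n h} : Ideal (Rpn2 p n)) := by
      have : PhiMap p n η ab ∈ PhiMap p n η ''
          sympDual p n (S : Set ((Fin n → ZMod p) × (Fin n → ZMod p))) :=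
        ⟨ab, hab, rfl⟩
      rwa [hgen] at this
    obtain ⟨r, hr⟩ := Ideal.mem_span_singleton'.mp hmem
    obtain ⟨g, rfl⟩ := Ideal.Quotient.mk_surjective r
    have hPhi : PhiMap p n η ab = mkR2 p n f0 := rfl
    have hzero : mkR2 p n (g * h - f0) = 0 := by
      have : mkR2 p n (g * h) = mkR2 p n f0 := by
        rw [map_mul]; rw [hPhi] at hr; exact hr
      rw [map_sub, this, sub_self]
    have hdvd1 : ((X : Polynomial (GaloisField p 2)) ^ n + 1) ∣ g * h - f0 := by
      have := Ideal.Quotient.eq_zero_iff_mem.mp hzero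
      exact Ideal.mem_span_singleton.mp this
    have hdvdf : h ∣ f0 := by
      have h1 : h ∣ g * h - f0 := dvd_trans hhdvd hdvd1
      have h2 : h ∣ g * h := dvd_mul_left h g
      have := dvd_sub h2 h1
      simpa using this
    -- roots of f0
    have hfroot : ∀ i : ℕ, i + 2 ≤ d → aeval (β ^ (ℓ + 2 * (i : ℤ))) f0 = 0 := by
      intro i hi
      obtain ⟨q, hq⟩ := hdvdf
      rw [hq, map_mul, hroots i hi, zero_mul]
    -- aeval expansion
    have haeval : ∀ m : ℤ, aeval (β ^ m) f0
        = ∑ j : Fin n, algebraMap (GaloisField p 2) (AlgebraicClosure (GaloisField p 2)) (c j) * β ^ (m * (j : ℕ)) := by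
      intro m
      rw [hf0, map_sum]
      refine Finset.sum_congr rfl fun j _ => ?_
      rw [map_mul, aeval_C, map_pow, aeval_X, ← zpow_natCast (β ^ m), ← zpow_mul]
    -- restrict sum to T via the equivalence
    set e : Fin w ≃ {x // x ∈ T} := T.equivFin.symm with he
    set nodes : Fin w → (AlgebraicClosure (GaloisField p 2)) := fun k => β ^ (2 * (((e k : Fin n) : ℕ) : ℤ)) with hnodes
    set v : Fin w → (AlgebraicClosure (GaloisField p 2)) := fun k =>
      algebraMap (GaloisField p 2) (AlgebraicClosure (GaloisField p 2)) (c (e k)) * β ^ (ℓ * (((e k : Fin n) : ℕ) : ℤ)) with hv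
    have hnodes_inj : Function.Injective nodes := by
      intro k k' hkk
      have hlt1 : ((e k : Fin n) : ℕ) < n := (e k : Fin n).isLt
      have hlt2 : ((e k' : Fin n) : ℕ) < n := (e k' : Fin n).isLt
      have hkk' : β ^ (2 * ((e k : Fin n) : ℕ)) = β ^ (2 * ((e k' : Fin n) : ℕ)) := by
        have := hkk
        simp only [hnodes] at this
        rw [show (2 * (((e k : Fin n) : ℕ) : ℤ)) = ((2 * ((e k : Fin n) : ℕ) : ℕ) : ℤ) by
          push_cast; ring, zpow_natCast,
          show (2 * (((e k' : Fin n) : ℕ) : ℤ)) = ((2 * ((e k' : Fin n) : ℕ) : ℕ) : ℤ) by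
          push_cast; ring, zpow_natCast] at this
        exact this
      have := hβ.pow_inj (by omega) (by omega) hkk'
      have hjj : (e k : Fin n) = (e k' : Fin n) := Fin.ext (by omega)
      exact e.injective (Subtype.ext hjj)
    have hsum : ∀ i : Fin w, (∑ k : Fin w, v k * nodes k ^ (i : ℕ)) = 0 := by
      intro i
      have hid : (i : ℕ) + 2 ≤ d := by
        have := i.isLt
        omega
      have key : (∑ k : Fin w, v k * nodes k ^ (i : ℕ))
          = aeval (β ^ (ℓ + 2 * ((i : ℕ) : ℤ))) f0 := by
        rw [haeval]
        have hterm : ∀ k : Fin w, v k * nodes k ^ (i : ℕ)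
            = algebraMap (GaloisField p 2) (AlgebraicClosure (GaloisField p 2)) (c (e k)) * β ^ ((ℓ + 2 * ((i : ℕ) : ℤ)) * (((e k : Fin n) : ℕ))) := by
          intro k
          rw [hv, hnodes]
          rw [← zpow_natCast (β ^ (2 * (((e k : Fin n) : ℕ) : ℤ))), ← zpow_mul]
          rw [mul_assoc, ← zpow_add₀ hβ0]
          congr 2
          push_cast
          ring
        rw [Finset.sum_congr rfl fun k _ => hterm k]
        rw [Equiv.sum_comp e (fun x : {y // y ∈ T} =>
          algebraMap (GaloisField p 2) (AlgebraicClosure (GaloisField p 2)) (c x) * β ^ ((ℓ + 2 * ((i : ℕ) : ℤ)) * ((x : Fin n) : ℕ)))]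
        rw [Finset.sum_coe_sort T (fun x : Fin n =>
          algebraMap (GaloisField p 2) (AlgebraicClosure (GaloisField p 2)) (c x) * β ^ ((ℓ + 2 * ((i : ℕ) : ℤ)) * ((x : ℕ))))]
        refine Finset.sum_subset (Finset.subset_univ T) ?_
        intro j _ hjT
        have : c j = 0 := by
          by_contra hcj
          exact hjT (by simp [hT, hcj])
        rw [this, map_zero, zero_mul]
      rw [key]
      exact hfroot i hid
    have hv0 : v = 0 :=
      Matrix.eq_zero_of_forall_pow_sum_mul_pow_eq_zero hnodes_inj hsum
    -- contradiction: T is nonempty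
    have hex : ∃ j, c j ≠ 0 := by
      by_contra hcon
      push_neg at hcon
      apply habne
      have h1 : ab.1 = 0 := funext fun j => ((hczero j).mp (hcon j)).1
      have h2 : ab.2 = 0 := funext fun j => ((hczero j).mp (hcon j)).2
      exact Prod.ext h1 h2
    obtain ⟨j0, hj0⟩ := hex
    have hj0T : j0 ∈ T := by simp [hT, hj0]
    set k0 : Fin w := e.symm ⟨j0, hj0T⟩ with hk0
    have : v k0 = 0 := by rw [hv0]; rfl
    simp only [hv] at this
    have hek0 : (e k0 : Fin n) = j0 := by rw [hk0, Equiv.apply_symm_apply]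
    rw [hek0] at this
    rcases mul_eq_zero.mp this with h' | h'
    · exact hj0 ((_root_.map_eq_zero _).mp h')
    · exact (zpow_ne_zero _ hβ0) h'
  refine ⟨main, ?_⟩
  intro ab hab habS
  apply main ab hab
  rintro rfl
  exact habS S.zero_mem
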